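/- If v is a normalized game that is strategically equivalent to a game u, then v equals the normalized version ū of u, defined by ū_i(x) = u_i(x) − (1/|A_i|) · Σ_{a ∈ A_i} u_i(a, x_{-i}). In particular, ū is the unique normalized game in the strategic-equivalence class of u. -/

import Mathlib

/-- A game is *non-strategic* if each player's utility does not depend on her own action. -/
def NonStrategic {V : Type*} (A : V → Type*) (u : ∀ i : V, (∀ j, A j) → ℝ) : Prop :=
  ∀ i : V, ∀ x y : ∀ j, A j, (∀ j, j ≠ i → x j = y j) → u i x = u i y

/-- A game is *normalized* if for every player `i` and profile `x`, the sum of her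
utilities over all her possible actions (others' actions fixed) vanishes. -/
def Normalized {V : Type*} [DecidableEq V] (A : V → Type*) [∀ i, Fintype (A i)]
    (u : ∀ i : V, (∀ j, A j) → ℝ) : Prop :=
  ∀ i : V, ∀ x : ∀ j, A j, ∑ a : A i, u i (Function.update x i a) = 0

/-- The *normalized version* `ū` of a game `u`:
`ū_i(x) = u_i(x) − (1/|A_i|) · Σ_{a ∈ A_i} u_i(a, x_{-i})`. -/
noncomputable def normalizeGame {V : Type*} [DecidableEq V] (A : V → Type*)
    [∀ i, Fintype (A i)] (u : ∀ i : V, (∀ j, A j) → ℝ) :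
    ∀ i : V, (∀ j, A j) → ℝ :=
  fun i x => u i x -
    (1 / (Fintype.card (A i) : ℝ)) * ∑ a : A i, u i (Function.update x i a)

/-- The normalized version of `u` is the unique normalized game strategically
equivalent to `u`: any normalized game `v` strategically equivalent to `u` equals `ū`. -/
theorem normalized_equivalent_unique {V : Type*} [Fintype V] [DecidableEq V]
    {A : V → Type*} [∀ i, Fintype (A i)] [∀ i, Nonempty (A i)]
    (u v : ∀ i : V, (∀ j, A j) → ℝ)
    (hv : Normalized A v)
    (hequiv : NonStrategic A (fun i x => u i x - v i x)) :
    v = normalizeGame A u := by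
  funext i x
  have hc : (Fintype.card (A i) : ℝ) ≠ 0 := by
    exact_mod_cast Fintype.card_ne_zero
  have key : ∀ a : A i, u i (Function.update x i a) - v i (Function.update x i a)
      = u i x - v i x := by
    intro a
    exact hequiv i _ x (fun j hj => Function.update_of_ne hj _ _)
  have hsum : ∑ a : A i, (u i (Function.update x i a) - v i (Function.update x i a))
      = (Fintype.card (A i) : ℝ) * (u i x - v i x) := by
    rw [Finset.sum_congr rfl (fun a _ => key a)]
    rw [Finset.sum_const, nsmul_eq_mul, Finset.card_univ]
  rw [Finset.sum_sub_distrib, hv i x, sub_zero] at hsum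
  simp only [normalizeGame, hsum]
  field_simp
  ring
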